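/- Let e ≥ 1 and k be natural numbers with k < 2^(e-1), and for i ∈ ℕ set T_i = C(2^e+2k+1, i)⁻¹ − C(2k+1, i)⁻¹ ∈ ℚ. Then for every natural number i with 2i+1 ≤ k (i.e., 0 ≤ i ≤ ⌊(k−1)/2⌋), either T_{2i} + T_{2i+1} = 0 or ν(T_{2i} + T_{2i+1}) ≥ e − 2·lg(k+1) + 2·ν(k+1). -/

import Mathlib

section helpers

lemma pred_mod {M N : ℕ} (hM : 0 < M) (hN : 0 < N) (h : M ∣ N) : (N - 1) % M = M - 1 := by
  obtain ⟨q, rfl⟩ := h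
  have hq : q ≠ 0 := by rintro rfl; simp at hN
  obtain ⟨q', rfl⟩ := Nat.exists_eq_succ_of_ne_zero hq
  have h1 : M * (q' + 1) = M * q' + M := Nat.mul_succ M q'
  have h2 : M * (q' + 1) - 1 = M * q' + (M - 1) := by omega
  rw [h2, Nat.mul_add_mod, Nat.mod_eq_of_lt (by omega)]

lemma no_carry {x y M : ℕ} (hM : 0 < M) (hz : (x + y) % M = M - 1) :
    x % M + y % M = M - 1 := by
  have ha : x % M < M := Nat.mod_lt _ hM
  have hb : y % M < M := Nat.mod_lt _ hM
  have hs : (x % M + y % M) % M = M - 1 := by rw [Nat.add_mod] at hz; exact hz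
  rcases Nat.lt_or_ge (x % M + y % M) M with h1 | h1
  · rwa [Nat.mod_eq_of_lt h1] at hs
  · rw [Nat.mod_eq_sub_mod h1, Nat.mod_eq_of_lt (by omega)] at hs
    omega

lemma choose_val_le {z c t u B : ℕ} (hc : c ≤ z) (hz0 : z ≠ 0) (hzB : z < 2 ^ B)
    (hlow : 2 ^ t ∣ z + 1)
    (hhigh : ∀ i, u ≤ i → i < B → c % 2 ^ i + (z - c) % 2 ^ i < 2 ^ i) :
    padicValNat 2 (z.choose c) ≤ u - (t + 1) := by
  haveI : Fact (Nat.Prime 2) := ⟨Nat.prime_two⟩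
  rw [padicValNat_choose hc (Nat.log_lt_of_lt_pow hz0 hzB)]
  have hsub : (Finset.Ico 1 B).filter (fun i => 2 ^ i ≤ c % 2 ^ i + (z - c) % 2 ^ i)
      ⊆ Finset.Ico (t + 1) u := by
    intro i hi
    simp only [Finset.mem_filter, Finset.mem_Ico] at hi ⊢
    obtain ⟨⟨hi1, hiB⟩, hcar⟩ := hi
    constructor
    · by_contra hit
      push_neg at hit
      have hit' : i ≤ t := by omega
      have hdvd : (2:ℕ) ^ i ∣ z + 1 := dvd_trans (pow_dvd_pow 2 hit') hlow
      have hM : 0 < 2 ^ i := Nat.pow_pos (by norm_num)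
      have hzmod : (c + (z - c)) % 2 ^ i = 2 ^ i - 1 := by
        rw [Nat.add_sub_cancel' hc]
        have := pred_mod hM (Nat.succ_pos z) hdvd
        simpa using this
      have := no_carry hM hzmod
      omega
    · by_contra hiu
      push_neg at hiu
      exact absurd hcar (by have := hhigh i hiu hiB; omega)
  calc _ ≤ (Finset.Ico (t+1) u).card := Finset.card_le_card hsub
    _ = u - (t+1) := Nat.card_Ico _ _

lemma val_pow_two (g : ℕ) : padicValRat 2 ((2:ℚ)^g) = g := by
  haveI : Fact (Nat.Prime 2) := ⟨Nat.prime_two⟩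
  have : ((2:ℚ))^g = ((2^g : ℕ) : ℚ) := by push_cast; ring
  rw [this, padicValRat.of_nat, padicValNat.prime_pow]

lemma descfac_val (M g B : ℕ) (hM0 : 0 < M) (hMB : M < 2 ^ B) (hBg : B ≤ g + 1) :
    ∀ c, c ≤ M →
      (((M + 2 ^ g).descFactorial c : ℚ) = (M.descFactorial c : ℚ)) ∨
      (((M + 2 ^ g).descFactorial c : ℚ) - (M.descFactorial c : ℚ) ≠ 0 ∧
       padicValRat 2 (((M + 2 ^ g).descFactorial c : ℚ) - (M.descFactorial c : ℚ)) ≥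
         padicValRat 2 ((M.descFactorial c : ℚ)) + ((g : ℤ) + 1 - B)) := by
  haveI : Fact (Nat.Prime 2) := ⟨Nat.prime_two⟩
  intro c
  induction c with
  | zero => intro _; left; simp
  | succ c ih =>
    intro hc1
    have hc : c ≤ M := by omega
    set P : ℚ := (M.descFactorial c : ℚ) with hPdef
    set Q : ℚ := ((M + 2 ^ g).descFactorial c : ℚ) with hQdef
    have hP0 : P ≠ 0 := by
      simp only [hPdef, ne_eq, Nat.cast_eq_zero, Nat.descFactorial_eq_zero_iff_lt]
      omega
    have hQ0 : Q ≠ 0 := by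
      simp only [hQdef, ne_eq, Nat.cast_eq_zero, Nat.descFactorial_eq_zero_iff_lt]
      have : 0 < 2 ^ g := Nat.pow_pos (by norm_num)
      omega
    set w : ℕ := M - c with hwdef
    have hw0 : w ≠ 0 := by omega
    have hw0' : ((w : ℕ) : ℚ) ≠ 0 := by exact_mod_cast hw0
    have hPs : ((M.descFactorial (c+1) : ℕ) : ℚ) = (w : ℚ) * P := by
      rw [Nat.descFactorial_succ]; push_cast; ring
    have hQs : (((M + 2 ^ g).descFactorial (c+1) : ℕ) : ℚ) = ((w : ℚ) + 2 ^ g) * Q := by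
      rw [Nat.descFactorial_succ]
      have h1 : M + 2 ^ g - c = w + 2 ^ g := Nat.sub_add_comm hc
      rw [h1]; push_cast; ring
    have hνw : (padicValNat 2 w : ℤ) ≤ (B : ℤ) - 1 := by
      have h1 : padicValNat 2 w ≤ Nat.log 2 w := padicValNat_le_nat_log w
      have h2 : Nat.log 2 w ≤ Nat.log 2 M := Nat.log_mono_right (by omega)
      have h3 : Nat.log 2 M < B := Nat.log_lt_of_lt_pow (by omega) hMB
      omega
    have hνwQ : padicValRat 2 ((w : ℚ)) = (padicValNat 2 w : ℤ) := padicValRat.of_nat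
    have hd0 : (0:ℤ) ≤ (g : ℤ) + 1 - B := by omega
    rw [hPs, hQs]
    rcases ih hc with hQP | ⟨hne, hval⟩
    · right
      have hE : ((w : ℚ) + 2 ^ g) * Q - (w : ℚ) * P = 2 ^ g * P := by rw [hQP]; ring
      rw [hE]
      constructor
      · positivity
      · rw [padicValRat.mul (by positivity) hP0, val_pow_two,
          padicValRat.mul hw0' hP0, hνwQ]
        omega
    · by_cases heq : ((w : ℚ) + 2 ^ g) * Q = (w : ℚ) * P
      · left; exact heq
      right
      refine ⟨sub_ne_zero_of_ne heq, ?_⟩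
      have hsplit : ((w : ℚ) + 2 ^ g) * Q - (w : ℚ) * P
          = (w : ℚ) * (Q - P) + 2 ^ g * Q := by ring
      have hQP0 : Q - P ≠ 0 := hne
      have hνQ : padicValRat 2 Q ≥ padicValRat 2 P := by
        have hsum : P + (Q - P) ≠ 0 := by simpa using hQ0
        have h2 : min (padicValRat 2 P) (padicValRat 2 (Q - P)) ≤ padicValRat 2 Q := by
          simpa [add_sub_cancel] using padicValRat.min_le_padicValRat_add (p := 2) hsum
        have h3 : padicValRat 2 P ≤ padicValRat 2 (Q - P) := le_trans (by omega) hval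
        omega
      have ht1 : padicValRat 2 ((w : ℚ) * (Q - P)) ≥
          padicValRat 2 ((w : ℚ) * P) + ((g : ℤ) + 1 - B) := by
        rw [padicValRat.mul hw0' hQP0, padicValRat.mul hw0' hP0]
        omega
      have ht2 : padicValRat 2 (2 ^ g * Q) ≥
          padicValRat 2 ((w : ℚ) * P) + ((g : ℤ) + 1 - B) := by
        rw [padicValRat.mul (by positivity : (2:ℚ)^g ≠ 0) hQ0, val_pow_two,
          padicValRat.mul hw0' hP0, hνwQ]
        omega
      have hsum0 : (w : ℚ) * (Q - P) + 2 ^ g * Q ≠ 0 := by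
        rw [← hsplit]; exact sub_ne_zero_of_ne heq
      have hmin := padicValRat.min_le_padicValRat_add (p := 2) hsum0
      rw [hsplit]
      omega

lemma pair_inv (z c : ℕ) (hc : c + 1 ≤ z) :
    ((z.choose c : ℚ))⁻¹ + ((z.choose (c+1) : ℚ))⁻¹
      = ((z : ℚ) + 1) / ((((z : ℚ) - c)) * (z.choose c : ℚ)) := by
  have hA : ((z.choose c : ℕ) : ℚ) ≠ 0 := by
    exact_mod_cast (Nat.choose_pos (by omega : c ≤ z)).ne'
  have hB : ((z.choose (c+1) : ℕ) : ℚ) ≠ 0 := by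
    exact_mod_cast (Nat.choose_pos hc).ne'
  have hW : ((z : ℚ) - c) ≠ 0 := by
    have : (c : ℚ) < z := by exact_mod_cast (by omega : c < z)
    linarith
  have hc1 : ((c : ℚ) + 1) ≠ 0 := by positivity
  have hkey : ((z.choose (c+1) : ℕ) : ℚ) * ((c : ℚ) + 1)
      = ((z.choose c : ℕ) : ℚ) * ((z : ℚ) - c) := by
    have h := Nat.choose_succ_right_eq z c
    have hzc : ((z - c : ℕ) : ℚ) = (z : ℚ) - c := by
      push_cast [Nat.cast_sub (by omega : c ≤ z)]; ring
    rw [← hzc]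
    exact_mod_cast congrArg (Nat.cast : ℕ → ℚ) h
  have hB' : ((z.choose (c+1) : ℕ) : ℚ)
      = ((z.choose c : ℕ) : ℚ) * ((z : ℚ) - c) / ((c : ℚ) + 1) := by
    field_simp
    linear_combination hkey
  rw [hB']
  field_simp
  ring

end helpers

/-- ν = 2-adic valuation, lg = ⌊log₂⌋, T_i = C(2^e+2k+1,i)⁻¹ − C(2k+1,i)⁻¹ in ℚ. -/
theorem stmt_0 (e k : ℕ) (he : 1 ≤ e) (hk : k < 2 ^ (e - 1))
    (T : ℕ → ℚ)
    (hT : ∀ i : ℕ, T i = (((2 ^ e + 2 * k + 1).choose i : ℚ))⁻¹ - (((2 * k + 1).choose i : ℚ))⁻¹) :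
    ∀ i : ℕ, 2 * i + 1 ≤ k →
      T (2 * i) + T (2 * i + 1) = 0 ∨
        padicValRat 2 (T (2 * i) + T (2 * i + 1)) ≥
          (e : ℤ) - 2 * (Nat.log 2 (k + 1) : ℤ) + 2 * (padicValNat 2 (k + 1) : ℤ) := by
  haveI : Fact (Nat.Prime 2) := ⟨Nat.prime_two⟩
  intro i hik
  have hk1 : 1 ≤ k := by omega
  set c := 2 * i with hcdef
  set m := k + 1 with hmdef
  set L := Nat.log 2 m with hLdef
  set μ := padicValNat 2 m with hμdef
  set nn := m + 2 ^ (e - 1) with hnndef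
  have h2e : 2 ^ e = 2 * 2 ^ (e - 1) := by
    conv_lhs => rw [show e = (e - 1) + 1 by omega]
    ring
  set M := 2 * m - 1 with hMdef
  set N := 2 * nn - 1 with hNdef
  have hM1 : 2 * k + 1 = M := by omega
  have hN1 : 2 ^ e + 2 * k + 1 = N := by omega
  have hNM : N = M + 2 ^ e := by omega
  -- basic bounds
  have hm2 : m ≤ 2 ^ (e - 1) := hk
  have hmLt : m < 2 ^ (L + 1) := Nat.lt_pow_succ_log_self (by norm_num) m
  have h2L2 : (2:ℕ) ^ (L + 2) = 2 * 2 ^ (L + 1) := by ring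
  have h2E1 : (2:ℕ) ^ (e + 1) = 2 * 2 ^ e := by ring
  have hμL : μ ≤ L := padicValNat_le_nat_log m
  have hLe : L + 1 ≤ e := by
    have h1 : L ≤ Nat.log 2 (2 ^ (e - 1)) := Nat.log_mono_right hm2
    rw [Nat.log_pow (by norm_num)] at h1
    omega
  have hcm : c + 2 ≤ m := by omega
  have hcM : c + 1 ≤ M := by omega
  have hcN : c + 1 ≤ N := by omega
  have hMB : M < 2 ^ (L + 2) := by omega
  have hNB : N < 2 ^ (e + 1) := by omega
  set a := M.choose c with hadef
  set b := N.choose c with hbdef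
  have ha0' : ((a : ℕ) : ℚ) ≠ 0 := by
    exact_mod_cast (Nat.choose_pos (by omega : c ≤ M)).ne'
  have hb0' : ((b : ℕ) : ℚ) ≠ 0 := by
    exact_mod_cast (Nat.choose_pos (by omega : c ≤ N)).ne'
  set uN := M - c with huNdef
  set vN := N - c with hvNdef
  have huNc : uN + c = M := by omega
  have hvNc : vN + c = N := by omega
  have hR3 : uN + c + 1 = 2 * m := by omega
  have hR1 : vN = uN + 2 ^ e := by omega
  have hnn2 : 2 * nn = 2 * m + 2 ^ e := by omega
  have hM2 : M + 1 = 2 * m := by omega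
  have hN2 : N + 1 = 2 * nn := by omega
  have huN0' : ((uN : ℕ) : ℚ) ≠ 0 := by
    have : uN ≠ 0 := by omega
    exact_mod_cast this
  have hvN0' : ((vN : ℕ) : ℚ) ≠ 0 := by
    have : vN ≠ 0 := by omega
    exact_mod_cast this
  have hnn0' : ((nn : ℕ) : ℚ) ≠ 0 := by
    have : nn ≠ 0 := by omega
    exact_mod_cast this
  -- parity valuations
  have hU0 : padicValNat 2 uN = 0 := padicValNat.eq_zero_of_not_dvd (by omega)
  have hV0 : padicValNat 2 vN = 0 := padicValNat.eq_zero_of_not_dvd (by omega)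
  have hC0 : padicValNat 2 (c + 1) = 0 := padicValNat.eq_zero_of_not_dvd (by omega)
  -- Kummer bounds
  have hlowM : (2:ℕ) ^ (μ + 1) ∣ M + 1 := by
    obtain ⟨t2, ht2⟩ := pow_padicValNat_dvd (p := 2) (n := m)
    exact ⟨t2, by rw [hM2, ht2]; ring⟩
  have hdnn : (2:ℕ) ^ μ ∣ nn := by
    exact dvd_add pow_padicValNat_dvd (pow_dvd_pow 2 (by omega : μ ≤ e - 1))
  have hlowN : (2:ℕ) ^ (μ + 1) ∣ N + 1 := by
    obtain ⟨t2, ht2⟩ := hdnn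
    exact ⟨t2, by rw [hN2, ht2]; ring⟩
  have hva : (padicValNat 2 a : ℤ) ≤ (L : ℤ) - μ := by
    have h := choose_val_le (z := M) (c := c) (t := μ + 1) (u := L + 2) (B := L + 2)
      (by omega) (by omega) hMB hlowM (by intro j h1 h2; omega)
    have : padicValNat 2 a ≤ L + 2 - (μ + 2) := h
    omega
  have hvb : (padicValNat 2 b : ℤ) ≤ (L : ℤ) - μ := by
    have hhigh : ∀ j, L + 2 ≤ j → j < e + 1 → c % 2 ^ j + (N - c) % 2 ^ j < 2 ^ j := by
      intro j hj1 hj2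
      have hpow : (2:ℕ) ^ (L + 2) ≤ 2 ^ j := Nat.pow_le_pow_right (by norm_num) hj1
      have hcj : c % 2 ^ j = c := Nat.mod_eq_of_lt (by omega)
      have hNc : N - c = uN + 2 ^ j * 2 ^ (e - j) := by
        have : (2:ℕ) ^ e = 2 ^ j * 2 ^ (e - j) := by
          rw [← pow_add]
          congr 1
          omega
        omega
      have hmod : (N - c) % 2 ^ j = uN := by
        rw [hNc, Nat.add_mul_mod_self_left, Nat.mod_eq_of_lt (by omega)]
      omega
    have h := choose_val_le (z := N) (c := c) (t := μ + 1) (u := L + 2) (B := e + 1)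
      (by omega) (by omega) hNB hlowN hhigh
    have : padicValNat 2 b ≤ L + 2 - (μ + 2) := h
    omega
  -- the difference bound via descFactorial
  have habQ : ((a : ℕ) : ℚ) = (b : ℚ) ∨
      (((a : ℕ) : ℚ) - (b : ℚ) ≠ 0 ∧
        padicValRat 2 (((a : ℕ) : ℚ) - (b : ℚ)) ≥
          (padicValNat 2 a : ℤ) + ((e : ℤ) - L - 1)) := by
    have hfa : ((M.descFactorial c : ℕ) : ℚ) = (c.factorial : ℚ) * (a : ℚ) := by
      rw [hadef, Nat.descFactorial_eq_factorial_mul_choose]; push_cast; ring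
    have hfb : ((N.descFactorial c : ℕ) : ℚ) = (c.factorial : ℚ) * (b : ℚ) := by
      rw [hbdef, Nat.descFactorial_eq_factorial_mul_choose]; push_cast; ring
    have hcf0 : ((c.factorial : ℕ) : ℚ) ≠ 0 := by
      exact_mod_cast c.factorial_pos.ne'
    have hd := descfac_val M e (L + 2) (by omega) hMB (by omega) c (by omega)
    rw [← hNM] at hd
    rcases hd with hd | ⟨hne, hval⟩
    · left
      rw [hfa, hfb] at hd
      exact (mul_left_cancel₀ hcf0 hd).symm
    · right
      rw [hfa, hfb] at hne hval
      have hba0 : (b : ℚ) - (a : ℚ) ≠ 0 := by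
        intro h
        exact hne (by rw [sub_eq_zero] at h ⊢; rw [h])
      constructor
      · intro h
        rw [sub_eq_zero] at h
        exact hba0 (by rw [h]; ring)
      · have hsplit : (c.factorial : ℚ) * (b : ℚ) - (c.factorial : ℚ) * (a : ℚ)
            = (c.factorial : ℚ) * ((b : ℚ) - (a : ℚ)) := by ring
        rw [hsplit, padicValRat.mul hcf0 hba0, padicValRat.mul hcf0 ha0'] at hval
        have hneg : ((a : ℕ) : ℚ) - (b : ℚ) = -((b : ℚ) - (a : ℚ)) := by ring
        rw [hneg, padicValRat.neg]
        have hofa := padicValRat.of_nat (p := 2) (n := a)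
        omega
  have hvnn : (μ : ℤ) ≤ (padicValNat 2 nn : ℤ) := by
    have := (padicValNat_dvd_iff (p := 2) μ nn).1 hdnn
    rcases this with h | h
    · omega
    · omega
  -- T-sum equations (before clearing)
  have e1 := hT c
  have e2 := hT (c + 1)
  rw [hM1, hN1, ← hadef, ← hbdef] at e1
  rw [hM1, hN1] at e2
  -- forget definitions
  clear_value c m L μ nn M N a b uN vN
  -- rational abbreviations
  have hνa := padicValRat.of_nat (p := 2) (n := a)
  have hνb := padicValRat.of_nat (p := 2) (n := b)
  have hνu : padicValRat 2 ((uN : ℕ) : ℚ) = 0 := by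
    rw [padicValRat.of_nat, hU0]; simp
  have hνv : padicValRat 2 ((vN : ℕ) : ℚ) = 0 := by
    rw [padicValRat.of_nat, hV0]; simp
  have hνc1 : padicValRat 2 ((c : ℚ) + 1) = 0 := by
    have hcast : ((c : ℚ) + 1) = (((c + 1 : ℕ) : ℕ) : ℚ) := by push_cast; ring
    rw [hcast, padicValRat.of_nat, hC0]; simp
  have hν2 : padicValRat 2 (2 : ℚ) = 1 := by simpa using val_pow_two 1
  set X : ℚ := 2 * (((uN : ℕ) : ℚ) * (((nn : ℕ) : ℚ) * (((a : ℕ) : ℚ) - ((b : ℕ) : ℚ)))) with hXdef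
  set Y : ℚ := (2 : ℚ) ^ e * (((c : ℚ) + 1) * ((b : ℕ) : ℚ)) with hYdef
  set den : ℚ := ((uN : ℕ) : ℚ) * (((vN : ℕ) : ℚ) * (((a : ℕ) : ℚ) * ((b : ℕ) : ℚ))) with hdendef
  have hden0 : den ≠ 0 := by
    rw [hdendef]
    exact mul_ne_zero huN0' (mul_ne_zero hvN0' (mul_ne_zero ha0' hb0'))
  have hνden : padicValRat 2 den = (padicValNat 2 a : ℤ) + (padicValNat 2 b : ℤ) := by
    rw [hdendef, padicValRat.mul huN0' (mul_ne_zero hvN0' (mul_ne_zero ha0' hb0')),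
      padicValRat.mul hvN0' (mul_ne_zero ha0' hb0'), padicValRat.mul ha0' hb0',
      hνu, hνv, hνa, hνb]
    ring
  have hc10 : ((c : ℚ) + 1) ≠ 0 := by positivity
  have hνY : padicValRat 2 Y = (e : ℤ) + (padicValNat 2 b : ℤ) := by
    rw [hYdef, padicValRat.mul (by positivity) (mul_ne_zero hc10 hb0'),
      padicValRat.mul hc10 hb0', val_pow_two, hνc1, hνb]
    ring
  -- cast equations
  have hMq1 : (M : ℚ) + 1 = 2 * (m : ℚ) := by exact_mod_cast congrArg (Nat.cast : ℕ → ℚ) hM2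
  have hNq1 : (N : ℚ) + 1 = 2 * (nn : ℚ) := by exact_mod_cast congrArg (Nat.cast : ℕ → ℚ) hN2
  have huq : ((uN : ℕ) : ℚ) = (M : ℚ) - c := by
    have h := congrArg (Nat.cast : ℕ → ℚ) huNc
    push_cast at h
    linarith
  have hvq : ((vN : ℕ) : ℚ) = (N : ℚ) - c := by
    have h := congrArg (Nat.cast : ℕ → ℚ) hvNc
    push_cast at h
    linarith
  have qR1 : ((vN : ℕ) : ℚ) = ((uN : ℕ) : ℚ) + 2 ^ e := by
    have h := congrArg (Nat.cast : ℕ → ℚ) hR1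
    push_cast at h
    linarith
  have qR2 : 2 * ((nn : ℕ) : ℚ) = 2 * ((m : ℕ) : ℚ) + 2 ^ e := by
    have h := congrArg (Nat.cast : ℕ → ℚ) hnn2
    push_cast at h
    linarith
  have qR3 : (c : ℚ) + 1 = 2 * ((m : ℕ) : ℚ) - ((uN : ℕ) : ℚ) := by
    have h := congrArg (Nat.cast : ℕ → ℚ) hR3
    push_cast at h
    linarith
  -- the sum as a single fraction
  have hSnum : T c + T (c + 1) = (X - Y) / den := by
    have hsum : T c + T (c + 1)
        = (((b : ℕ) : ℚ)⁻¹ + ((N.choose (c+1) : ℕ) : ℚ)⁻¹)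
          - (((a : ℕ) : ℚ)⁻¹ + ((M.choose (c+1) : ℕ) : ℚ)⁻¹) := by
      rw [e1, e2]; ring
    have p1 := pair_inv N c hcN
    have p2 := pair_inv M c hcM
    rw [← hbdef] at p1
    rw [← hadef] at p2
    rw [hsum, p1, p2, hNq1, hMq1, ← huq, ← hvq]
    rw [div_sub_div _ _ (mul_ne_zero hvN0' hb0') (mul_ne_zero huN0' ha0'),
      div_eq_div_iff (mul_ne_zero (mul_ne_zero hvN0' hb0') (mul_ne_zero huN0' ha0')) hden0,
      hXdef, hYdef, hdendef]
    linear_combination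
      (((uN : ℕ) : ℚ) * ((vN : ℕ) : ℚ) * ((a : ℕ) : ℚ) * ((b : ℕ) : ℚ) *
        (((uN : ℕ) : ℚ) * ((b : ℕ) : ℚ))) * qR2
      - (((uN : ℕ) : ℚ) * ((vN : ℕ) : ℚ) * ((a : ℕ) : ℚ) * ((b : ℕ) : ℚ) *
        (2 * ((m : ℕ) : ℚ) * ((b : ℕ) : ℚ))) * qR1
      + (((uN : ℕ) : ℚ) * ((vN : ℕ) : ℚ) * ((a : ℕ) : ℚ) * ((b : ℕ) : ℚ) *
        ((2 : ℚ) ^ e * ((b : ℕ) : ℚ))) * qR3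
  rw [hSnum]
  by_cases h0 : X - Y = 0
  · left; rw [h0, zero_div]
  · right
    rw [padicValRat.div h0 hden0, hνden]
    rcases habQ with hab | ⟨hab0, habv⟩
    · have hX0 : X - Y = -Y := by rw [hXdef, hab]; ring
      rw [hX0, padicValRat.neg, hνY]
      omega
    · have hX0 : X ≠ 0 := by
        rw [hXdef]
        exact mul_ne_zero two_ne_zero (mul_ne_zero huN0' (mul_ne_zero hnn0' hab0))
      have hνX : padicValRat 2 X ≥
          1 + (padicValNat 2 nn : ℤ) + ((padicValNat 2 a : ℤ) + ((e : ℤ) - L - 1)) := by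
        rw [hXdef, padicValRat.mul two_ne_zero (mul_ne_zero huN0' (mul_ne_zero hnn0' hab0)),
          padicValRat.mul huN0' (mul_ne_zero hnn0' hab0), padicValRat.mul hnn0' hab0,
          hν2, hνu, padicValRat.of_nat]
        omega
      have hY0 : Y ≠ 0 := by
        rw [hYdef]
        exact mul_ne_zero (by positivity) (mul_ne_zero hc10 hb0')
      have hmin : min (padicValRat 2 X) (padicValRat 2 (-Y)) ≤ padicValRat 2 (X + (-Y)) :=
        padicValRat.min_le_padicValRat_add (by rw [← sub_eq_add_neg]; exact h0)
      rw [← sub_eq_add_neg, padicValRat.neg, hνY] at hmin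
      rcases min_cases (padicValRat 2 X) ((e : ℤ) + (padicValNat 2 b : ℤ)) with ⟨hm1, _⟩ | ⟨hm1, _⟩ <;>
        rw [hm1] at hmin <;> omega
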